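/- Let r ≥ 2 be an integer. Consider the ground set [r] × [r], partitioned into the r blocks {i} × [r] for i ∈ [r], and let S be a uniformly random subset of [r] × [r] of cardinality r. Then the probability that S intersects every block in exactly one element equals r^r / C(r², r), and moreover r^r / C(r², r) ≤ 4e · r · e^{-r}, where C(n, k) denotes the binomial coefficient. -/

import Mathlib

private lemma factorial_exp_le' : ∀ n : ℕ, 1 ≤ n →
    (n.factorial : ℝ) * Real.exp n ≤ Real.exp 1 * (n : ℝ) ^ (n + 1) := by
  intro n hn
  induction n, hn using Nat.le_induction with
  | base => simp [Nat.factorial]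
  | succ m hm ih =>
    have hm0 : (0:ℝ) < (m:ℝ) := by exact_mod_cast hm
    set t : ℝ := 1 / ((m:ℝ) + 1) with ht
    have ht0 : (0:ℝ) < (m:ℝ) + 1 := by linarith
    have h1 : 1 - t ≤ Real.exp (-t) := by
      have := Real.add_one_le_exp (-t); linarith
    have ha := Real.exp_pos t
    have h2 : (m:ℝ) * Real.exp t ≤ (m:ℝ) + 1 := by
      rw [Real.exp_neg] at h1
      have h1' : (1 - t) * Real.exp t ≤ 1 := by
        calc (1 - t) * Real.exp t ≤ (Real.exp t)⁻¹ * Real.exp t :=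
              mul_le_mul_of_nonneg_right h1 ha.le
          _ = 1 := inv_mul_cancel₀ ha.ne'
      have : (1 - t) * ((m:ℝ) + 1) = (m:ℝ) := by
        rw [ht, sub_mul, one_div, inv_mul_cancel₀ ht0.ne']; ring
      nlinarith [h1', ha]
    have hexp1 : Real.exp 1 = Real.exp t ^ (m + 1) := by
      rw [← Real.exp_nat_mul]
      congr 1
      rw [ht, Nat.cast_succ, mul_one_div, div_self ht0.ne']
    have key : Real.exp 1 * (m:ℝ) ^ (m + 1) ≤ ((m:ℝ) + 1) ^ (m + 1) := by
      calc Real.exp 1 * (m:ℝ) ^ (m + 1) = ((m:ℝ) * Real.exp t) ^ (m + 1) := by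
            rw [hexp1, mul_pow]; ring
        _ ≤ ((m:ℝ) + 1) ^ (m + 1) :=
            pow_le_pow_left₀ (by positivity) h2 _
    have hfac : ((m+1).factorial : ℝ) = ((m:ℝ) + 1) * (m.factorial : ℝ) := by
      push_cast [Nat.factorial_succ]; ring
    have hexp : Real.exp ((m:ℝ) + 1) = Real.exp m * Real.exp 1 := by
      rw [← Real.exp_add]
    have hfe : (0:ℝ) ≤ (m.factorial : ℝ) * Real.exp m := by positivity
    calc ((m+1).factorial : ℝ) * Real.exp ((m:ℕ) + 1 : ℕ)
        = ((m:ℝ) + 1) * ((m.factorial : ℝ) * Real.exp m) * Real.exp 1 := by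
          push_cast [hfac, hexp]; ring
      _ ≤ ((m:ℝ) + 1) * (Real.exp 1 * (m:ℝ) ^ (m + 1)) * Real.exp 1 :=
          mul_le_mul_of_nonneg_right
            (mul_le_mul_of_nonneg_left ih (by linarith)) (Real.exp_pos 1).le
      _ ≤ ((m:ℝ) + 1) * (((m:ℝ) + 1) ^ (m+1)) * Real.exp 1 :=
          mul_le_mul_of_nonneg_right
            (mul_le_mul_of_nonneg_left key (by linarith)) (Real.exp_pos 1).le
      _ = Real.exp 1 * ((m:ℝ) + 1) ^ (m + 2) := by ring
      _ = Real.exp 1 * (((m:ℕ) + 1 : ℕ) : ℝ) ^ ((m + 1) + 1) := by push_cast; ring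

private lemma pow_le_four_mul' (r : ℕ) (hr : 2 ≤ r) :
    ((r:ℝ)) ^ r ≤ 4 * ((r:ℝ) - 1) ^ r := by
  rcases Nat.lt_or_ge r 4 with h4 | h4
  · interval_cases r <;> norm_num
  · have hx : (4:ℝ) ≤ (r:ℝ) := by exact_mod_cast h4
    set y : ℝ := (r:ℝ) - 1 with hy
    have hy0 : (0:ℝ) < y := by simp [hy]; linarith
    have h1 : (r:ℝ) ≤ y * Real.exp (1 / y) := by
      have := Real.add_one_le_exp (1 / y)
      have h2 : (1 / y + 1) * y ≤ Real.exp (1 / y) * y :=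
        mul_le_mul_of_nonneg_right this hy0.le
      have h3 : (1 / y + 1) * y = (r:ℝ) := by rw [add_mul, one_div, inv_mul_cancel₀ hy0.ne', hy]; ring
      linarith [h2, h3.symm.le]
    have h5 : ((r:ℝ)) ^ r ≤ (y * Real.exp (1 / y)) ^ r :=
      pow_le_pow_left₀ (by positivity) h1 r
    have h6 : (y * Real.exp (1 / y)) ^ r = y ^ r * Real.exp ((r:ℝ) * (1 / y)) := by
      rw [mul_pow, Real.exp_nat_mul]
    have h7 : (r:ℝ) * (1 / y) ≤ 4 / 3 := by
      rw [mul_one_div, div_le_div_iff₀ hy0 (by norm_num)]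
      simp only [hy]; linarith
    have e0 := Real.exp_pos (1:ℝ)
    have h9 := Real.exp_one_lt_d9
    have e2 : Real.exp 1 ^ 2 < 7.39 := by nlinarith
    have e4 : Real.exp 1 ^ 4 < 55 := by nlinarith [sq_nonneg (Real.exp 1), pow_pos e0 2]
    have hcube : Real.exp (4/3 : ℝ) ^ 3 = Real.exp 1 ^ 4 := by
      rw [← Real.exp_nat_mul, ← Real.exp_nat_mul]; norm_num
    have h8 : Real.exp (4/3 : ℝ) ≤ 4 := by
      by_contra hc
      push_neg at hc
      have : (4:ℝ)^3 < Real.exp (4/3 : ℝ) ^ 3 := by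
        nlinarith [mul_pos (sub_pos.mpr hc)
          (by positivity : (0:ℝ) < Real.exp (4/3:ℝ)^2 + 4 * Real.exp (4/3:ℝ) + 16)]
      rw [hcube] at this
      have h43 : ((4:ℝ))^3 = 64 := by norm_num
      linarith
    have h10 : Real.exp ((r:ℝ) * (1 / y)) ≤ 4 := le_trans (Real.exp_le_exp.mpr h7) h8
    calc ((r:ℝ)) ^ r ≤ y ^ r * Real.exp ((r:ℝ) * (1 / y)) := by rw [← h6]; exact h5
      _ ≤ y ^ r * 4 := mul_le_mul_of_nonneg_left h10 (by positivity)
      _ = 4 * y ^ r := by ring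

/-- **Hard example for the Nikolov–Singh rounding** (Appendix A): among the uniformly random
size-`r` subsets of `[r] × [r]`, the proportion of those meeting every block `{i} × [r]` in
exactly one element is `r^r / C(r², r)`, which is at most `4 e r e^{-r}`. -/
theorem transversal_probability
    (r : ℕ) (hr : 2 ≤ r) :
    ((Finset.univ : Finset (Fin r × Fin r)).powersetCard r).card = (r ^ 2).choose r ∧
    (((Finset.univ : Finset (Fin r × Fin r)).powersetCard r).filter
        (fun S => ∀ i : Fin r, (S.filter fun q => q.1 = i).card = 1)).card = r ^ r ∧
    ((r : ℝ) ^ r) / ((r ^ 2).choose r) ≤ 4 * Real.exp 1 * r * Real.exp (-(r : ℝ)) := by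
  refine ⟨?_, ?_, ?_⟩
  · simp [Finset.card_powersetCard, Finset.card_univ, sq]
  · -- counting transversals
    have hinj : ∀ f : Fin r → Fin r, Function.Injective (fun i : Fin r => (i, f i)) :=
      fun f a b h => congrArg Prod.fst h
    have hfiber : ∀ (f : Fin r → Fin r) (i : Fin r),
        (Finset.image (fun j => (j, f j)) Finset.univ).filter (fun q => q.1 = i)
          = {(i, f i)} := by
      intro f i
      ext q
      simp only [Finset.mem_filter, Finset.mem_image, Finset.mem_univ, true_and,
        Finset.mem_singleton]
      constructor
      · rintro ⟨⟨j, rfl⟩, h⟩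
        obtain rfl : j = i := h
        rfl
      · rintro rfl
        exact ⟨⟨i, rfl⟩, rfl⟩
    have key : (Finset.univ : Finset (Fin r → Fin r)).card =
        (((Finset.univ : Finset (Fin r × Fin r)).powersetCard r).filter
          (fun S => ∀ i : Fin r, (S.filter fun q => q.1 = i).card = 1)).card := by
      refine Finset.card_bij (fun f _ => Finset.image (fun i => (i, f i)) Finset.univ)
        ?_ ?_ ?_
      · intro f _
        rw [Finset.mem_filter, Finset.mem_powersetCard]
        refine ⟨⟨Finset.subset_univ _, ?_⟩, ?_⟩
        · rw [Finset.card_image_of_injective _ (hinj f)]; simp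
        · intro i
          rw [hfiber f i, Finset.card_singleton]
      · intro f _ g _ h
        funext i
        have h' : Finset.image (fun j => (j, f j)) Finset.univ
            = Finset.image (fun j => (j, g j)) Finset.univ := h
        have hmem : (i, f i) ∈ Finset.image (fun j => (j, g j)) Finset.univ := by
          rw [← h']
          exact Finset.mem_image_of_mem _ (Finset.mem_univ i)
        obtain ⟨j, -, hj⟩ := Finset.mem_image.mp hmem
        injection hj with h1 h2
        rw [← h2, h1]
      · intro S hS
        rw [Finset.mem_filter] at hS
        obtain ⟨-, hS2⟩ := hS
        have hex : ∀ i : Fin r, ∃ a, S.filter (fun q => q.1 = i) = {a} :=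
          fun i => Finset.card_eq_one.mp (hS2 i)
        choose g hg using hex
        have hg1 : ∀ i, g i ∈ S ∧ (g i).1 = i := by
          intro i
          have : g i ∈ S.filter (fun q => q.1 = i) := by
            rw [hg i]; exact Finset.mem_singleton_self _
          simpa using this
        refine ⟨fun i => (g i).2, Finset.mem_univ _, ?_⟩
        ext q
        simp only [Finset.mem_image, Finset.mem_univ, true_and]
        constructor
        · rintro ⟨j, rfl⟩
          have h1 := (hg1 j).2
          have h2 : (j, (g j).2) = g j := Prod.ext h1.symm rfl
          rw [h2]
          exact (hg1 j).1
        · intro hq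
          refine ⟨q.1, ?_⟩
          have : q ∈ S.filter (fun p => p.1 = q.1) := Finset.mem_filter.mpr ⟨hq, rfl⟩
          rw [hg q.1, Finset.mem_singleton] at this
          rw [← this]
    rw [← key]
    simp
  · -- the analytic bound
    have hr1 : 1 ≤ r := le_trans (by norm_num) hr
    have hrr : r ≤ r ^ 2 := by nlinarith
    have hCpos : 0 < (r ^ 2).choose r := Nat.choose_pos hrr
    have hC0 : (0:ℝ) < ((r ^ 2).choose r : ℝ) := by exact_mod_cast hCpos
    -- descFactorial bound
    have hle : r * (r - 1) ≤ r ^ 2 + 1 - r := by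
      have e1 : r * (r - 1) = r * r - r := by
        rw [Nat.mul_sub, mul_one]
      have e2 : r ^ 2 = r * r := sq r
      rw [e1, e2]
      have : r ≤ r * r := Nat.le_mul_of_pos_left r (by omega)
      omega
    have hdesc : (r * (r - 1)) ^ r ≤ r.factorial * (r ^ 2).choose r := by
      calc (r * (r - 1)) ^ r ≤ (r ^ 2 + 1 - r) ^ r := Nat.pow_le_pow_left hle r
        _ ≤ (r ^ 2).descFactorial r := Nat.pow_sub_le_descFactorial _ _
        _ = r.factorial * (r ^ 2).choose r := Nat.descFactorial_eq_factorial_mul_choose _ _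
    set x : ℝ := (r : ℝ) with hx
    have hx2 : (2:ℝ) ≤ x := by rw [hx]; exact_mod_cast hr
    have hy0 : (0:ℝ) < x - 1 := by linarith
    have hcast : ((r - 1 : ℕ) : ℝ) = x - 1 := by
      push_cast [Nat.cast_sub hr1]; rfl
    have hCreal : x ^ r * (x - 1) ^ r ≤ (r.factorial : ℝ) * ((r ^ 2).choose r : ℝ) := by
      have := hdesc
      have hcst : ((r * (r - 1)) ^ r : ℝ) ≤ (r.factorial * (r ^ 2).choose r : ℕ) := by
        exact_mod_cast this
      calc x ^ r * (x - 1) ^ r = ((r * (r - 1) : ℕ) : ℝ) ^ r := by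
            push_cast [hcast]; rw [← mul_pow]
        _ = (((r * (r - 1)) ^ r : ℕ) : ℝ) := by push_cast; ring
        _ ≤ ((r.factorial * (r ^ 2).choose r : ℕ) : ℝ) := by exact_mod_cast this
        _ = (r.factorial : ℝ) * ((r ^ 2).choose r : ℝ) := by push_cast; ring
    have hA : (r.factorial : ℝ) ≤ Real.exp 1 * x ^ (r + 1) * Real.exp (-x) := by
      have h := factorial_exp_le' r hr1
      have he := Real.exp_pos x
      have : (r.factorial : ℝ) * Real.exp x ≤ Real.exp 1 * x ^ (r + 1) := h
      calc (r.factorial : ℝ) = (r.factorial : ℝ) * Real.exp x * Real.exp (-x) := by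
            rw [mul_assoc, ← Real.exp_add]; simp
        _ ≤ Real.exp 1 * x ^ (r + 1) * Real.exp (-x) :=
            mul_le_mul_of_nonneg_right this (Real.exp_pos _).le
    have hB : x ^ r ≤ 4 * (x - 1) ^ r := pow_le_four_mul' r hr
    have hCC : (0:ℝ) ≤ ((r ^ 2).choose r : ℝ) := hC0.le
    have step : x ^ r * (x - 1) ^ r ≤
        (4 * Real.exp 1 * x * Real.exp (-x) * ((r ^ 2).choose r : ℝ)) * (x - 1) ^ r := by
      calc x ^ r * (x - 1) ^ r
          ≤ (r.factorial : ℝ) * ((r ^ 2).choose r : ℝ) := hCreal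
        _ ≤ (Real.exp 1 * x ^ (r + 1) * Real.exp (-x)) * ((r ^ 2).choose r : ℝ) :=
            mul_le_mul_of_nonneg_right hA hCC
        _ = (Real.exp 1 * x * Real.exp (-x) * ((r ^ 2).choose r : ℝ)) * x ^ r := by ring
        _ ≤ (Real.exp 1 * x * Real.exp (-x) * ((r ^ 2).choose r : ℝ)) * (4 * (x - 1) ^ r) := by
            refine mul_le_mul_of_nonneg_left hB ?_
            have := Real.exp_pos (-x)
            have := Real.exp_pos (1:ℝ)
            positivity
        _ = (4 * Real.exp 1 * x * Real.exp (-x) * ((r ^ 2).choose r : ℝ)) * (x - 1) ^ r := by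
            ring
    have hfinal : x ^ r ≤ 4 * Real.exp 1 * x * Real.exp (-x) * ((r ^ 2).choose r : ℝ) :=
      le_of_mul_le_mul_right step (pow_pos hy0 r)
    rw [div_le_iff₀ hC0]
    exact hfinal
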